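/- Let s > 0 and r ≥ 0. The Lebesgue area of the intersection of the square S₀(s) = [−s/2, s/2] × [−s/2, s/2] with the closed ball B(0,r) is: ν₂(S₀(s) ∩ B(0,r)) = π r² if 0 ≤ r ≤ s/2; ν₂(S₀(s) ∩ B(0,r)) = π r² − 4 r² · arccos(s/(2r)) + s·√(4r² − s²) if s/2 ≤ r ≤ s/√2; and ν₂(S₀(s) ∩ B(0,r)) = s² if r ≥ s/√2. -/

import Mathlib

open MeasureTheory Real

set_option maxHeartbeats 1000000

/-- The square `S₀(s) = [−s/2, s/2] × [−s/2, s/2]`. -/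
def square (s : ℝ) : Set (EuclideanSpace ℝ (Fin 2)) :=
  {u | u 0 ∈ Set.Icc (-(s / 2)) (s / 2) ∧ u 1 ∈ Set.Icc (-(s / 2)) (s / 2)}

/- ### Auxiliary lemmas -/

/-- Antiderivative of `√(r² - x²)`. -/
noncomputable def sqrtAntideriv (r : ℝ) : ℝ → ℝ :=
  fun x => (x * Real.sqrt (r^2 - x^2) + r^2 * Real.arcsin (x/r)) / 2

lemma sqrtAntideriv_hasDerivAt (r : ℝ) (hr : 0 < r) {x : ℝ} (hx : x ∈ Set.Ioo (-r) r) :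
    HasDerivAt (sqrtAntideriv r) (Real.sqrt (r^2 - x^2)) x := by
  have hc : 0 < r^2 - x^2 := by nlinarith [hx.1, hx.2]
  have hsc : 0 < Real.sqrt (r^2 - x^2) := Real.sqrt_pos.2 hc
  have h1 : HasDerivAt (fun x : ℝ => r^2 - x^2) (-(2*x)) x := by
    simpa using (hasDerivAt_pow 2 x).const_sub (r^2)
  have h2 : HasDerivAt (fun x : ℝ => Real.sqrt (r^2 - x^2))
      (1 / (2 * Real.sqrt (r^2 - x^2)) * (-(2*x))) x :=
    (Real.hasDerivAt_sqrt hc.ne').comp x h1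
  have h3 : HasDerivAt (fun x : ℝ => x * Real.sqrt (r^2 - x^2))
      (1 * Real.sqrt (r^2 - x^2) + x * (1 / (2 * Real.sqrt (r^2 - x^2)) * (-(2*x)))) x :=
    (hasDerivAt_id x).mul h2
  have hne1 : x / r ≠ -1 := by
    intro h; rw [div_eq_iff hr.ne'] at h; nlinarith [hx.1]
  have hne2 : x / r ≠ 1 := by
    intro h; rw [div_eq_iff hr.ne'] at h; nlinarith [hx.2]
  have h4 : HasDerivAt (fun x : ℝ => Real.arcsin (x / r))
      (1 / Real.sqrt (1 - (x/r)^2) * (1/r)) x :=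
    by have := (Real.hasDerivAt_arcsin hne1 hne2).comp x ((hasDerivAt_id x).div_const r); exact this
  have h5 := (h3.add (h4.const_mul (r^2))).div_const 2
  refine h5.congr_deriv (Eq.symm ?_)
  have hs1 : Real.sqrt (1 - (x/r)^2) = Real.sqrt (r^2 - x^2) / r := by
    rw [show (1 : ℝ) - (x/r)^2 = (r^2 - x^2) / r^2 by field_simp,
      Real.sqrt_div hc.le, Real.sqrt_sq hr.le]
  rw [hs1]
  have h6 : Real.sqrt (r^2 - x^2) * Real.sqrt (r^2 - x^2) = r^2 - x^2 :=
    Real.mul_self_sqrt hc.le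
  field_simp
  linear_combination h6

lemma integ_sqrt (r : ℝ) (hr : 0 < r) (a b : ℝ) (ha : -r ≤ a) (hab : a ≤ b) (hb : b ≤ r) :
    ∫ x in a..b, Real.sqrt (r^2 - x^2) = sqrtAntideriv r b - sqrtAntideriv r a := by
  have hcont : ContinuousOn (sqrtAntideriv r) (Set.Icc a b) := by
    apply Continuous.continuousOn
    unfold sqrtAntideriv
    exact (Continuous.add (continuous_id.mul (Real.continuous_sqrt.comp (by fun_prop)))
      (continuous_const.mul (Real.continuous_arcsin.comp (continuous_id.div_const r)))).div_const 2
  refine intervalIntegral.integral_eq_sub_of_hasDeriv_right_of_le hab hcont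
    (fun x hx => ?_) ?_
  · exact (sqrtAntideriv_hasDerivAt r hr
      ⟨lt_of_le_of_lt ha hx.1, lt_of_lt_of_le hx.2 hb⟩).hasDerivWithinAt
  · exact (Continuous.intervalIntegrable (by fun_prop) a b)

lemma key_integral (s r : ℝ) (hs : 0 < s) (h1 : s/2 ≤ r) (h2 : r ≤ s / Real.sqrt 2) :
    ∫ x in (-(s/2))..(s/2), 2 * min (s/2) (Real.sqrt (r^2 - x^2))
      = π * r^2 - 4 * r^2 * Real.arccos (s/(2*r)) + s * Real.sqrt (4*r^2 - s^2) := by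
  have hr : 0 < r := lt_of_lt_of_le (by linarith) h1
  have hs2 : (0:ℝ) < s/2 := by linarith
  have hrs : r^2 ≤ s^2/2 := by
    have h2' : r * Real.sqrt 2 ≤ s := (le_div_iff₀ (by positivity)).1 h2
    nlinarith [mul_le_mul h2' h2' (by positivity) hs.le,
      Real.sq_sqrt (by norm_num : (0:ℝ) ≤ 2), Real.sqrt_nonneg 2]
  have hc0 : (0:ℝ) ≤ r^2 - (s/2)^2 := by nlinarith
  set A := Real.sqrt (r^2 - (s/2)^2) with hA
  have hA0 : 0 ≤ A := Real.sqrt_nonneg _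
  have hA2 : A^2 = r^2 - (s/2)^2 := Real.sq_sqrt hc0
  have hAs : A ≤ s/2 := by
    have : A^2 ≤ (s/2)^2 := by rw [hA2]; nlinarith
    nlinarith
  have hcont : Continuous fun x : ℝ => 2 * min (s/2) (Real.sqrt (r^2 - x^2)) := by
    apply continuous_const.mul
    exact continuous_const.min (Real.continuous_sqrt.comp (by fun_prop))
  have hsplit : ∫ x in (-(s/2))..(s/2), 2 * min (s/2) (Real.sqrt (r^2 - x^2))
      = (∫ x in (-(s/2))..(-A), 2 * min (s/2) (Real.sqrt (r^2 - x^2)))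
      + (∫ x in (-A)..A, 2 * min (s/2) (Real.sqrt (r^2 - x^2)))
      + (∫ x in A..(s/2), 2 * min (s/2) (Real.sqrt (r^2 - x^2))) := by
    rw [intervalIntegral.integral_add_adjacent_intervals,
      intervalIntegral.integral_add_adjacent_intervals]
    all_goals exact hcont.intervalIntegrable _ _
  have hmid : (∫ x in (-A)..A, 2 * min (s/2) (Real.sqrt (r^2 - x^2))) = 2*A*s := by
    rw [show (∫ x in (-A)..A, 2 * min (s/2) (Real.sqrt (r^2 - x^2)))
        = ∫ _x in (-A)..A, s from intervalIntegral.integral_congr ?_]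
    · rw [intervalIntegral.integral_const, smul_eq_mul]
      ring
    · intro x hx
      rw [Set.uIcc_of_le (by linarith)] at hx
      have hx2 : x^2 ≤ A^2 := by
        rcases hx with ⟨hl, hu⟩; nlinarith
      have : s/2 ≤ Real.sqrt (r^2 - x^2) := by
        rw [Real.le_sqrt hs2.le (by nlinarith)]
        nlinarith
      dsimp only
      rw [min_eq_left this]; ring
  have hright : (∫ x in A..(s/2), 2 * min (s/2) (Real.sqrt (r^2 - x^2)))
      = 2 * (sqrtAntideriv r (s/2) - sqrtAntideriv r A) := by
    rw [show (∫ x in A..(s/2), 2 * min (s/2) (Real.sqrt (r^2 - x^2)))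
        = ∫ x in A..(s/2), 2 * Real.sqrt (r^2 - x^2) from intervalIntegral.integral_congr ?_]
    · rw [intervalIntegral.integral_const_mul,
        integ_sqrt r hr A (s/2) (by linarith) hAs (by linarith)]
    · intro x hx
      rw [Set.uIcc_of_le hAs] at hx
      have hx2 : A^2 ≤ x^2 := by rcases hx with ⟨hl, hu⟩; nlinarith
      have h1' : Real.sqrt (r^2 - x^2) ≤ s/2 := by
        calc Real.sqrt (r^2 - x^2) ≤ Real.sqrt ((s/2)^2) :=
              Real.sqrt_le_sqrt (by nlinarith)
          _ = s/2 := Real.sqrt_sq hs2.le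
      dsimp only
      rw [min_eq_right h1']
  have hleft : (∫ x in (-(s/2))..(-A), 2 * min (s/2) (Real.sqrt (r^2 - x^2)))
      = 2 * (sqrtAntideriv r (-A) - sqrtAntideriv r (-(s/2))) := by
    rw [show (∫ x in (-(s/2))..(-A), 2 * min (s/2) (Real.sqrt (r^2 - x^2)))
        = ∫ x in (-(s/2))..(-A), 2 * Real.sqrt (r^2 - x^2) from
          intervalIntegral.integral_congr ?_]
    · rw [intervalIntegral.integral_const_mul,
        integ_sqrt r hr (-(s/2)) (-A) (by linarith) (by linarith) (by linarith)]
    · intro x hx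
      rw [Set.uIcc_of_le (by linarith)] at hx
      have hx2 : A^2 ≤ x^2 := by rcases hx with ⟨hl, hu⟩; nlinarith
      have h1' : Real.sqrt (r^2 - x^2) ≤ s/2 := by
        calc Real.sqrt (r^2 - x^2) ≤ Real.sqrt ((s/2)^2) :=
              Real.sqrt_le_sqrt (by nlinarith)
          _ = s/2 := Real.sqrt_sq hs2.le
      dsimp only
      rw [min_eq_right h1']
  have hrA : r^2 - A^2 = (s/2)^2 := by rw [hA2]; ring
  have hsqA : Real.sqrt (r^2 - A^2) = s/2 := by rw [hrA, Real.sqrt_sq hs2.le]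
  have harc : Real.arcsin (A/r) = Real.arccos (s/(2*r)) := by
    rw [Real.arccos_eq_arcsin (by positivity)]
    congr 1
    rw [show (1:ℝ) - (s/(2*r))^2 = (r^2 - (s/2)^2)/r^2 by field_simp,
      Real.sqrt_div hc0, Real.sqrt_sq hr.le]
  have harcsin : Real.arcsin (s/(2*r)) = π/2 - Real.arccos (s/(2*r)) := by
    rw [Real.arccos_eq_pi_div_two_sub_arcsin]; ring
  have hFs : sqrtAntideriv r (s/2)
      = ((s/2)*A + r^2*(π/2 - Real.arccos (s/(2*r))))/2 := by
    rw [sqrtAntideriv, ← hA, show s/2/r = s/(2*r) by ring, harcsin]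
  have hFA : sqrtAntideriv r A = (A*(s/2) + r^2*Real.arccos (s/(2*r)))/2 := by
    rw [sqrtAntideriv, hsqA, harc]
  have hFnA : sqrtAntideriv r (-A)
      = -((A*(s/2) + r^2*Real.arccos (s/(2*r)))/2) := by
    rw [sqrtAntideriv, show r^2 - (-A)^2 = r^2 - A^2 by ring, hsqA, neg_div,
      Real.arcsin_neg, harc]; ring
  have hFns : sqrtAntideriv r (-(s/2))
      = -(((s/2)*A + r^2*(π/2 - Real.arccos (s/(2*r))))/2) := by
    rw [sqrtAntideriv,
      show r^2 - (-(s/2))^2 = r^2-(s/2)^2 by ring, ← hA, neg_div,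
      Real.arcsin_neg, show s/2/r = s/(2*r) by ring, harcsin]
    ring
  have hsqrt4 : Real.sqrt (4*r^2 - s^2) = 2*A := by
    rw [show (4:ℝ)*r^2 - s^2 = 2^2*(r^2 - (s/2)^2) by ring, Real.sqrt_mul (by norm_num),
      Real.sqrt_sq (by norm_num : (0:ℝ) ≤ 2), ← hA]
  rw [hsplit, hmid, hright, hleft, hFs, hFA, hFnA, hFns, hsqrt4]
  ring

lemma vol_preimage (A : Set (ℝ × ℝ)) (hA : MeasurableSet A) :
    volume ((fun u : EuclideanSpace ℝ (Fin 2) => ((u 0 : ℝ), u 1)) ⁻¹' A) = volume A := by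
  have h1 := EuclideanSpace.volume_preserving_symm_measurableEquiv_toLp (Fin 2)
  have h2 := volume_preserving_finTwoArrow ℝ
  have h3 : (fun u : EuclideanSpace ℝ (Fin 2) => ((u 0 : ℝ), u 1))
      = (MeasurableEquiv.finTwoArrow ∘ (MeasurableEquiv.toLp 2 (Fin 2 → ℝ)).symm) := by
    funext u; simp [MeasurableEquiv.finTwoArrow]
  rw [h3, Set.preimage_comp]
  rw [h1.measure_preimage (by exact (h2.measurable (by exact hA)).nullMeasurableSet)]
  exact h2.measure_preimage hA.nullMeasurableSet

lemma mem_ball_iff_sq (r : ℝ) (hr : 0 ≤ r) (u : EuclideanSpace ℝ (Fin 2)) :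
    u ∈ Metric.closedBall (0 : EuclideanSpace ℝ (Fin 2)) r ↔ (u 0)^2 + (u 1)^2 ≤ r^2 := by
  rw [mem_closedBall_zero_iff, EuclideanSpace.norm_eq, Fin.sum_univ_two, Real.sqrt_le_iff]
  simp only [Real.norm_eq_abs, sq_abs]
  exact ⟨fun h => h.2, fun h => ⟨hr, h⟩⟩

lemma region_measurable (s r : ℝ) :
    MeasurableSet {p : ℝ × ℝ | p.1 ∈ Set.Icc (-(s/2)) (s/2) ∧ p.2 ∈ Set.Icc (-(s/2)) (s/2)
      ∧ p.1^2 + p.2^2 ≤ r^2} := by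
  apply MeasurableSet.inter (measurable_fst measurableSet_Icc)
  apply MeasurableSet.inter (measurable_snd measurableSet_Icc)
  exact measurableSet_le ((measurable_fst.pow_const 2).add (measurable_snd.pow_const 2))
    measurable_const

lemma set_eq_region (s r : ℝ) (hr : 0 ≤ r) :
    square s ∩ Metric.closedBall (0 : EuclideanSpace ℝ (Fin 2)) r
      = (fun u : EuclideanSpace ℝ (Fin 2) => ((u 0 : ℝ), u 1)) ⁻¹'
        {p : ℝ × ℝ | p.1 ∈ Set.Icc (-(s/2)) (s/2) ∧ p.2 ∈ Set.Icc (-(s/2)) (s/2)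
          ∧ p.1^2 + p.2^2 ≤ r^2} := by
  ext u
  simp only [Set.mem_inter_iff, Set.mem_preimage, Set.mem_setOf_eq, square,
    mem_ball_iff_sq r hr u]
  tauto

lemma vol_region_mid (s r : ℝ) (hs : 0 < s) (h1 : s/2 ≤ r) :
    volume {p : ℝ × ℝ | p.1 ∈ Set.Icc (-(s/2)) (s/2) ∧ p.2 ∈ Set.Icc (-(s/2)) (s/2)
        ∧ p.1^2 + p.2^2 ≤ r^2}
      = ENNReal.ofReal (∫ x in (-(s/2))..(s/2), 2 * min (s/2) (Real.sqrt (r^2 - x^2))) := by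
  have hr : 0 < r := lt_of_lt_of_le (by linarith) h1
  set A := {p : ℝ × ℝ | p.1 ∈ Set.Icc (-(s/2)) (s/2) ∧ p.2 ∈ Set.Icc (-(s/2)) (s/2)
        ∧ p.1^2 + p.2^2 ≤ r^2} with hAdef
  have hA : MeasurableSet A := region_measurable s r
  have hslice : ∀ x : ℝ, (Prod.mk x ⁻¹' A) =
      if x ∈ Set.Icc (-(s/2)) (s/2) then
        Set.Icc (max (-(s/2)) (-(Real.sqrt (r^2 - x^2)))) (min (s/2) (Real.sqrt (r^2 - x^2)))
      else ∅ := by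
    intro x
    split_ifs with hx
    · ext y
      rw [Set.mem_Icc] at hx
      have hc : (0:ℝ) ≤ r^2 - x^2 := by nlinarith [hx.1, hx.2]
      have hy : (x^2 + y^2 ≤ r^2) ↔ (|y| ≤ Real.sqrt (r^2 - x^2)) := by
        constructor
        · intro h
          rw [← Real.sqrt_sq_eq_abs]
          exact Real.sqrt_le_sqrt (by nlinarith)
        · intro h
          have h2 := Real.sq_sqrt hc
          nlinarith [abs_nonneg y, sq_abs y, pow_le_pow_left₀ (abs_nonneg y) h 2]
      rw [abs_le] at hy
      simp only [hAdef, Set.mem_preimage, Set.mem_setOf_eq, Set.mem_Icc, hx.1, hx.2, true_and,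
        and_true, max_le_iff, le_min_iff, hy]
      tauto
    · ext y
      simp only [hAdef, Set.mem_preimage, Set.mem_setOf_eq, Set.mem_empty_iff_false, iff_false]
      intro h
      exact hx h.1
  have hvol : ∀ x : ℝ, volume (Prod.mk x ⁻¹' A)
      = Set.indicator (Set.Icc (-(s/2)) (s/2))
          (fun x => ENNReal.ofReal (2 * min (s/2) (Real.sqrt (r^2 - x^2)))) x := by
    intro x
    rw [hslice x]
    split_ifs with hx
    · rw [Set.indicator_of_mem hx, Real.volume_Icc, max_neg_neg]
      congr 1
      ring
    · rw [Set.indicator_of_notMem hx, measure_empty]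
  rw [Measure.volume_eq_prod, Measure.prod_apply hA]
  rw [lintegral_congr hvol, lintegral_indicator measurableSet_Icc _]
  have hcont : Continuous fun x : ℝ => 2 * min (s/2) (Real.sqrt (r^2 - x^2)) := by
    apply continuous_const.mul
    exact continuous_const.min (Real.continuous_sqrt.comp (by fun_prop))
  rw [← MeasureTheory.ofReal_integral_eq_lintegral_ofReal
    (hcont.integrableOn_Icc.mono_measure le_rfl)
    (Filter.Eventually.of_forall fun x => by positivity)]
  rw [MeasureTheory.integral_Icc_eq_integral_Ioc,
    ← intervalIntegral.integral_of_le (by linarith)]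

/-- the Lebesgue area of `S₀(s) ∩ B(0,r)`. -/
theorem area_square_inter_ball (s r : ℝ) (hs : 0 < s) (hr : 0 ≤ r) :
    (r ≤ s / 2 →
      volume (square s ∩ Metric.closedBall (0 : EuclideanSpace ℝ (Fin 2)) r)
        = ENNReal.ofReal (π * r ^ 2)) ∧
    (s / 2 ≤ r → r ≤ s / Real.sqrt 2 →
      volume (square s ∩ Metric.closedBall (0 : EuclideanSpace ℝ (Fin 2)) r)
        = ENNReal.ofReal
            (π * r ^ 2 - 4 * r ^ 2 * Real.arccos (s / (2 * r))
              + s * Real.sqrt (4 * r ^ 2 - s ^ 2))) ∧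
    (s / Real.sqrt 2 ≤ r →
      volume (square s ∩ Metric.closedBall (0 : EuclideanSpace ℝ (Fin 2)) r)
        = ENNReal.ofReal (s ^ 2)) := by
  refine ⟨fun h1 => ?_, fun h1 h2 => ?_, fun h1 => ?_⟩
  · -- ball inside square
    have hsub : Metric.closedBall (0 : EuclideanSpace ℝ (Fin 2)) r ⊆ square s := by
      intro u hu
      rw [mem_closedBall_zero_iff] at hu
      have key : ∀ i : Fin 2, u i ∈ Set.Icc (-(s/2)) (s/2) := by
        intro i
        have habs : |u i| ≤ ‖u‖ := by
          rw [EuclideanSpace.norm_eq, Fin.sum_univ_two, ← Real.sqrt_sq_eq_abs]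
          apply Real.sqrt_le_sqrt
          fin_cases i <;> simp [Real.norm_eq_abs, sq_abs] <;> positivity
        have := abs_le.1 (habs.trans (hu.trans h1))
        exact ⟨this.1, this.2⟩
      exact ⟨key 0, key 1⟩
    rw [Set.inter_eq_right.2 hsub, EuclideanSpace.volume_closedBall]
    have h2 : (Fintype.card (Fin 2)) = 2 := by simp
    rw [h2]
    have hpg : Real.sqrt π ^ 2 / Real.Gamma ((2:ℕ) / 2 + 1) = π := by
      rw [Real.sq_sqrt Real.pi_pos.le]
      norm_num
    rw [hpg, ← ENNReal.ofReal_pow hr, ← ENNReal.ofReal_mul (by positivity), mul_comm]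
  · -- middle case
    rw [set_eq_region s r hr, vol_preimage _ (region_measurable s r),
      vol_region_mid s r hs h1, key_integral s r hs h1 h2]
  · -- square inside ball
    have hsub : square s ⊆ Metric.closedBall (0 : EuclideanSpace ℝ (Fin 2)) r := by
      rintro u ⟨⟨h01, h02⟩, h11, h12⟩
      have hr0 : 0 ≤ r := le_trans (by positivity) h1
      rw [mem_closedBall_zero_iff, EuclideanSpace.norm_eq, Fin.sum_univ_two]
      refine Real.sqrt_le_iff.2 ⟨hr0, ?_⟩
      have h2 : s ≤ r * Real.sqrt 2 := (div_le_iff₀ (by positivity)).1 h1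
      have h3 : s^2 ≤ 2 * r^2 := by
        nlinarith [mul_le_mul h2 h2 hs.le (by positivity),
          Real.sq_sqrt (by norm_num : (0:ℝ) ≤ 2), Real.sqrt_nonneg 2]
      simp only [Real.norm_eq_abs, sq_abs]
      nlinarith
    rw [Set.inter_eq_left.2 hsub]
    have hsq : square s = (fun u : EuclideanSpace ℝ (Fin 2) => ((u 0 : ℝ), u 1)) ⁻¹'
        ((Set.Icc (-(s/2)) (s/2)) ×ˢ (Set.Icc (-(s/2)) (s/2))) := rfl
    rw [hsq, vol_preimage _ (measurableSet_Icc.prod measurableSet_Icc),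
      Measure.volume_eq_prod, Measure.prod_prod, Real.volume_Icc,
      ← ENNReal.ofReal_mul (by linarith : (0:ℝ) ≤ s/2 - -(s/2))]
    congr 1
    ring
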